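/- Let G be a graph on node set {0,1,...,2k+1} with G - 0 = C_{2k+1} (the odd cycle on {1,...,2k+1}) and deg_G(0) = s ≥ 1. Then the number of odd central cycles of G is odd. In particular G has at least one odd central cycle. -/
import Mathlib


/-- Nodes `i,j ∈ {1,…,2k+1}` are consecutive on the cycle `C_{2k+1}`. -/
def consec (k : ℕ) (i j : Fin (2*k+2)) : Prop :=
  (j : ℕ) = (i : ℕ) + 1 ∨ (i : ℕ) = (j : ℕ) + 1 ∨
    ((i : ℕ) = 1 ∧ (j : ℕ) = 2*k+1) ∨ ((i : ℕ) = 2*k+1 ∧ (j : ℕ) = 1)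

/-- Number of nodes of the `i`-th central cycle `D_i`, where
`v : Fin s → Fin (2k+2)` is the increasing enumeration of the neighbours of
node `0` on the cycle `C_{2k+1}`.  For `i < s-1`, `D_i` consists of node `0`
and the path of `C_{2k+1}` from `v i` to `v (i+1)`; the last central cycle
consists of node `0` and the path from `v (s-1)` through `2k+1` and `1` to `v 0`. -/
def centralLen (k s : ℕ) (v : Fin s → Fin (2*k+2)) (i : Fin s) : ℕ :=
  if h : (i : ℕ) + 1 < s then ((v ⟨(i : ℕ) + 1, h⟩ : ℕ) - (v i : ℕ)) + 2
  else (2*k + 3) - (v i : ℕ) + (v ⟨0, i.pos⟩ : ℕ)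

/-- If `G - 0 = C_{2k+1}` and node `0` has `s ≥ 1` neighbours, then the number of
odd central cycles of `G` is odd; in particular there is at least one. -/
theorem stmt5 (k s : ℕ) (hk : 1 ≤ k) (hs : 1 ≤ s)
    (G : SimpleGraph (Fin (2*k+2)))
    (hGC : ∀ i j : Fin (2*k+2), i ≠ 0 → j ≠ 0 → (G.Adj i j ↔ consec k i j))
    (v : Fin s → Fin (2*k+2)) (hmono : StrictMono v)
    (hne : ∀ i, v i ≠ 0) (hnbr : ∀ i, G.Adj 0 (v i))
    (hall : ∀ u : Fin (2*k+2), G.Adj 0 u → ∃ i, v i = u) :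
    Odd ((Finset.univ.filter (fun i : Fin s => Odd (centralLen k s v i))).card) ∧
    ∃ i : Fin s, Odd (centralLen k s v i) := by
  -- extend v to a monotone g : ℕ → ℕ
  set g : ℕ → ℕ := fun i => (v ⟨min i (s-1), by omega⟩ : ℕ) with hg
  have hgmin : ∀ i (h : i < s), g i = (v ⟨i, h⟩ : ℕ) := by
    intro i h
    have e : (⟨min i (s-1), by omega⟩ : Fin s) = ⟨i, h⟩ := Fin.mk_eq_mk.mpr (by omega)
    simp only [hg, e]
  have hgmono : Monotone g := by
    intro a b hab
    simp only [hg]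
    have : (⟨min a (s-1), by omega⟩ : Fin s) ≤ ⟨min b (s-1), by omega⟩ := by
      simp [Fin.le_def]; omega
    exact_mod_cast (hmono.monotone this)
  have hglt : ∀ i, g i < 2*k+2 := fun i => (v _).isLt
  -- the sum is odd
  have hsum : Odd (∑ i : Fin s, centralLen k s v i) := by
    have hF : ∀ i : Fin s, centralLen k s v i =
        (fun n : ℕ => if n + 1 < s then (g (n+1) - g n) + 2 else (2*k+3) - g n + g 0) (i : ℕ) := by
      intro i
      by_cases h : (i : ℕ) + 1 < s
      · simp [centralLen, h, hgmin _ h, hgmin _ i.isLt]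
      · simp [centralLen, h, hgmin _ i.isLt, hgmin 0 (by omega)]
    rw [Finset.sum_congr rfl (fun i _ => hF i),
      Fin.sum_univ_eq_sum_range (fun n : ℕ => if n + 1 < s then (g (n+1) - g n) + 2 else (2*k+3) - g n + g 0) s]
    have hdecomp : Finset.range s = insert (s-1) (Finset.range (s-1)) := by
      have hse : s = (s-1)+1 := by omega
      conv_lhs => rw [hse]
      rw [Finset.range_add_one]
    rw [hdecomp, Finset.sum_insert (by simp)]
    have h1 : ¬ ((s-1) + 1 < s) := by omega
    rw [if_neg h1]
    have h2 : ∀ n ∈ Finset.range (s-1),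
        (if n + 1 < s then (g (n+1) - g n) + 2 else (2*k+3) - g n + g 0)
        = (g (n+1) - g n) + 2 := by
      intro n hn; rw [if_pos (by simp at hn; omega)]
    rw [Finset.sum_congr rfl h2, Finset.sum_add_distrib, Finset.sum_range_tsub hgmono,
      Finset.sum_const, Finset.card_range, smul_eq_mul]
    have := hglt (s-1)
    have : g 0 ≤ g (s-1) := hgmono (by omega)
    have h3 : (2*k+3) - g (s-1) + g 0 + (g (s-1) - g 0 + (s-1) * 2) = 2*k+3 + (s-1)*2 := by
      omega
    rw [h3]
    refine ⟨k + 1 + (s-1), by ring⟩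
  rw [Finset.odd_sum_iff_odd_card_odd] at hsum
  refine ⟨hsum, ?_⟩
  obtain ⟨i, hi⟩ := Finset.card_pos.mp hsum.pos 
  exact ⟨i, (Finset.mem_filter.mp hi).2⟩
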